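/- Let A be a graded-commutative superalgebra over a field of characteristic not 2. Then Nil(A) := { x ∈ A : x^n = 0 for some n } equals Nil(R) ⊕ A_0^odd ⊕ A_1^ev, where R = A_0^ev ⊕ A_1^odd, and Nil(A) is a two-sided ideal of A with A/Nil(A) a reduced commutative ring. -/

import Mathlib

/-- A graded-commutative graded superalgebra over `k`: a `ℤ × ZMod 2`-graded
`k`-algebra satisfying the sign rule `ab = (-1)^(|a|·|b| + deg a · deg b) ba`
for homogeneous elements. -/
structure GradedSuperalgebra (k A : Type) [Field k] [Ring A] [Algebra k A] where
  grading : ℤ × ZMod 2 → Submodule k A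
  one_mem : (1 : A) ∈ grading (0, 0)
  mul_mem : ∀ {i j : ℤ × ZMod 2} {a b : A},
    a ∈ grading i → b ∈ grading j → a * b ∈ grading (i + j)
  internal : DirectSum.IsInternal grading
  comm : ∀ {m n : ℤ} {s t : ZMod 2} {a b : A}, a ∈ grading (m, s) → b ∈ grading (n, t) →
    a * b = ((-1 : k) ^ ((s * t).val + (m * n).natAbs)) • (b * a)

namespace GradedSuperalgebra

variable {k A : Type} [Field k] [Ring A] [Algebra k A] (GS : GradedSuperalgebra k A)

/-- The sum of the graded pieces whose index satisfies a predicate. -/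
def piece (P : ℤ × ZMod 2 → Prop) : Submodule k A :=
  ⨆ p : {p : ℤ × ZMod 2 // P p}, GS.grading p

/-- `R = A₀ᵉᵛ ⊕ A₁ᵒᵈᵈ`: even ℤ-degree with parity `0` together with odd ℤ-degree
with parity `1`; an ordinary-commutative subalgebra of `A`. -/
def Rsub : Submodule k A :=
  GS.piece fun p => (Even p.1 ∧ p.2 = 0) ∨ (Odd p.1 ∧ p.2 = 1)

/-- `A₀ᵉᵛ`: even ℤ-degree, parity `0`. -/
def A0ev : Submodule k A := GS.piece fun p => Even p.1 ∧ p.2 = 0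

/-- `A₁ᵒᵈᵈ`: odd ℤ-degree, parity `1`. -/
def A1odd : Submodule k A := GS.piece fun p => Odd p.1 ∧ p.2 = 1

/-- `A₀ᵒᵈᵈ`: odd ℤ-degree, parity `0`. -/
def A0odd : Submodule k A := GS.piece fun p => Odd p.1 ∧ p.2 = 0

/-- `A₁ᵉᵛ`: even ℤ-degree, parity `1`. -/
def A1ev : Submodule k A := GS.piece fun p => Even p.1 ∧ p.2 = 1

/-- A submodule of `A` is homogeneous if it is spanned by its homogeneous elements. -/
def IsHomogeneous (I : Submodule k A) : Prop :=
  I = Submodule.span k {x : A | x ∈ I ∧ ∃ p, x ∈ GS.grading p}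

end GradedSuperalgebra

section Statement4Aux

open GradedSuperalgebra

variable {k A : Type} [Field k] [Ring A] [Algebra k A]

/-- The set of homogeneous elements. -/
def Hset (GS : GradedSuperalgebra k A) : Set A := {x | ∃ p, x ∈ GS.grading p}

/-- Homogeneous elements with square zero. -/
def Zset (GS : GradedSuperalgebra k A) : Set A := {x | x ∈ Hset GS ∧ x * x = 0}

/-- The span of the square-zero homogeneous elements. -/
def Isub (GS : GradedSuperalgebra k A) : Submodule k A := Submodule.span k (Zset GS)

variable (GS : GradedSuperalgebra k A)

lemma mul_H {a b : A} (ha : a ∈ Hset GS) (hb : b ∈ Hset GS) : a * b ∈ Hset GS := by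
  obtain ⟨p, hp⟩ := ha; obtain ⟨q, hq⟩ := hb; exact ⟨p + q, GS.mul_mem hp hq⟩

lemma arith_aux {s t : ZMod 2} {m n : ℤ} (h : Odd ((s * t).val + (m * n).natAbs)) :
    Odd (s.val + m.natAbs) ∨ Odd (t.val + n.natAbs) := by
  have hval : ∀ u v : ZMod 2, (u * v).val = u.val * v.val % 2 := by decide
  have hlt : s.val < 2 := ZMod.val_lt s
  have hlt' : t.val < 2 := ZMod.val_lt t
  rw [hval, Int.natAbs_mul, Nat.odd_iff] at h
  rw [Nat.odd_iff, Nat.odd_iff]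
  have hmn : m.natAbs * n.natAbs % 2 = m.natAbs % 2 * (n.natAbs % 2) % 2 := Nat.mul_mod _ _ _
  have e1 : s.val = 0 ∨ s.val = 1 := by omega
  have e2 : t.val = 0 ∨ t.val = 1 := by omega
  have e3 : m.natAbs % 2 = 0 ∨ m.natAbs % 2 = 1 := by omega
  have e4 : n.natAbs % 2 = 0 ∨ n.natAbs % 2 = 1 := by omega
  rcases e1 with e1 | e1 <;> rcases e2 with e2 | e2 <;> rcases e3 with e3 | e3 <;>
    rcases e4 with e4 | e4 <;> rw [e1, e2] at h <;> rw [e3, e4] at hmn <;> omega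

lemma sq_zero (h2 : (2 : k) ≠ 0) {m : ℤ} {s : ZMod 2} {x : A}
    (hx : x ∈ GS.grading (m, s)) (hodd : Odd (s.val + m.natAbs)) : x * x = 0 := by
  have h := GS.comm hx hx
  have hexp : Odd ((s * s).val + (m * m).natAbs) := by
    have hs : ∀ u : ZMod 2, u * u = u := by decide
    rw [hs s, Int.natAbs_mul, Nat.odd_iff] at *
    have : m.natAbs * m.natAbs % 2 = m.natAbs % 2 * (m.natAbs % 2) % 2 := Nat.mul_mod _ _ _
    have e3 : m.natAbs % 2 = 0 ∨ m.natAbs % 2 = 1 := by omega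
    rcases e3 with e3 | e3 <;> rw [e3] at this <;> omega
  rw [hexp.neg_one_pow, neg_one_smul] at h
  have h' : (2 : k) • (x * x) = 0 := by
    rw [two_smul]; nth_rewrite 1 [h]; rw [neg_add_cancel]
  rcases smul_eq_zero.mp h' with hc | hc
  · exact absurd hc h2
  · exact hc

lemma sign_lemma (h2 : (2 : k) ≠ 0) {a b : A} (ha : a ∈ Hset GS) (hb : b ∈ Hset GS) :
    a * b = b * a ∨ (a * b = -(b * a) ∧ (a * a = 0 ∨ b * b = 0)) := by
  obtain ⟨⟨m, s⟩, hpa⟩ := ha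
  obtain ⟨⟨n, t⟩, hpb⟩ := hb
  have h := GS.comm hpa hpb
  rcases Nat.even_or_odd ((s * t).val + (m * n).natAbs) with he | he
  · left; rw [he.neg_one_pow, one_smul] at h; exact h
  · right
    refine ⟨by rw [he.neg_one_pow, neg_one_smul] at h; exact h, ?_⟩
    rcases arith_aux he with h' | h'
    · exact Or.inl (sq_zero GS h2 hpa h')
    · exact Or.inr (sq_zero GS h2 hpb h')

lemma Z_mul_left (h2 : (2 : k) ≠ 0) {h z : A} (hh : h ∈ Hset GS) (hz : z ∈ Zset GS) :
    h * z ∈ Zset GS := by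
  obtain ⟨hzH, hz2⟩ := hz
  refine ⟨mul_H GS hh hzH, ?_⟩
  have key : h * z * (h * z) = h * (z * h) * z := by noncomm_ring
  rcases sign_lemma GS h2 hzH hh with hc | ⟨hc, _⟩
  · rw [key, hc, show h * (h * z) * z = h * h * (z * z) by noncomm_ring, hz2, mul_zero]
  · rw [key, hc, show h * -(h * z) * z = -(h * h * (z * z)) by noncomm_ring, hz2, mul_zero,
      neg_zero]

lemma Z_mul_right (h2 : (2 : k) ≠ 0) {h z : A} (hh : h ∈ Hset GS) (hz : z ∈ Zset GS) :
    z * h ∈ Zset GS := by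
  obtain ⟨hzH, hz2⟩ := hz
  refine ⟨mul_H GS hzH hh, ?_⟩
  have key : z * h * (z * h) = z * (h * z) * h := by noncomm_ring
  rcases sign_lemma GS h2 hh hzH with hc | ⟨hc, _⟩
  · rw [key, hc, show z * (z * h) * h = z * z * (h * h) by noncomm_ring, hz2, zero_mul]
  · rw [key, hc, show z * -(z * h) * h = -(z * z * (h * h)) by noncomm_ring, hz2, zero_mul,
      neg_zero]

lemma span_H_top : Submodule.span k (Hset GS) = ⊤ := by
  rw [eq_top_iff, ← GS.internal.submodule_iSup_eq_top]
  exact iSup_le fun p x hx => Submodule.subset_span ⟨p, hx⟩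

lemma I_mul_left (h2 : (2 : k) ≠ 0) (a : A) {i : A} (hi : i ∈ Isub GS) :
    a * i ∈ Isub GS := by
  have key : ∀ h ∈ Hset GS, ∀ j ∈ Isub GS, h * j ∈ Isub GS := by
    intro h hh j hj
    induction hj using Submodule.span_induction with
    | mem x hx => exact Submodule.subset_span (Z_mul_left GS h2 hh hx)
    | zero => rw [mul_zero]; exact zero_mem _
    | add x y _ _ ihx ihy => rw [mul_add]; exact add_mem ihx ihy
    | smul c x _ ih => rw [mul_smul_comm]; exact Submodule.smul_mem _ _ ih
  have ha : a ∈ Submodule.span k (Hset GS) := by rw [span_H_top]; trivial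
  induction ha using Submodule.span_induction with
  | mem x hx => exact key x hx i hi
  | zero => rw [zero_mul]; exact zero_mem _
  | add x y _ _ ihx ihy => rw [add_mul]; exact add_mem ihx ihy
  | smul c x _ ih => rw [smul_mul_assoc]; exact Submodule.smul_mem _ _ ih

lemma I_mul_right (h2 : (2 : k) ≠ 0) (a : A) {i : A} (hi : i ∈ Isub GS) :
    i * a ∈ Isub GS := by
  have key : ∀ h ∈ Hset GS, ∀ j ∈ Isub GS, j * h ∈ Isub GS := by
    intro h hh j hj
    induction hj using Submodule.span_induction with
    | mem x hx => exact Submodule.subset_span (Z_mul_right GS h2 hh hx)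
    | zero => rw [zero_mul]; exact zero_mem _
    | add x y _ _ ihx ihy => rw [add_mul]; exact add_mem ihx ihy
    | smul c x _ ih => rw [smul_mul_assoc]; exact Submodule.smul_mem _ _ ih
  have ha : a ∈ Submodule.span k (Hset GS) := by rw [span_H_top]; trivial
  induction ha using Submodule.span_induction with
  | mem x hx => exact key x hx i hi
  | zero => rw [mul_zero]; exact zero_mem _
  | add x y _ _ ihx ihy => rw [mul_add]; exact add_mem ihx ihy
  | smul c x _ ih => rw [mul_smul_comm]; exact Submodule.smul_mem _ _ ih

lemma comm_mem (h2 : (2 : k) ≠ 0) (a b : A) : a * b - b * a ∈ Isub GS := by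
  have key : ∀ x ∈ Hset GS, ∀ y ∈ Hset GS, x * y - y * x ∈ Isub GS := by
    intro x hx y hy
    rcases sign_lemma GS h2 hx hy with hc | ⟨hc, hsq⟩
    · rw [hc, sub_self]; exact zero_mem _
    · have hba : y * x = -(x * y) := by rw [hc, neg_neg]
      have hxy : x * y ∈ Zset GS := by
        refine ⟨mul_H GS hx hy, ?_⟩
        calc x * y * (x * y) = x * (y * x) * y := by noncomm_ring
          _ = x * -(x * y) * y := by rw [hba]
          _ = -(x * x * (y * y)) := by noncomm_ring
          _ = 0 := by rcases hsq with h | h <;> rw [h] <;> simp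
      have hyx : y * x ∈ Isub GS := by
        rw [hba]; exact neg_mem (Submodule.subset_span hxy)
      exact sub_mem (Submodule.subset_span hxy) hyx
  have ha : a ∈ Submodule.span k (Hset GS) := by rw [span_H_top]; trivial
  have hb : b ∈ Submodule.span k (Hset GS) := by rw [span_H_top]; trivial
  induction ha using Submodule.span_induction with
  | mem x hx =>
    induction hb using Submodule.span_induction with
    | mem y hy => exact key x hx y hy
    | zero => simp only [mul_zero, zero_mul, sub_zero]; exact zero_mem _
    | add y z _ _ ihy ihz =>
      have : x * (y + z) - (y + z) * x = (x * y - y * x) + (x * z - z * x) := by noncomm_ring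
      rw [this]; exact add_mem ihy ihz
    | smul c y _ ih =>
      have : x * (c • y) - (c • y) * x = c • (x * y - y * x) := by
        rw [mul_smul_comm, smul_mul_assoc, smul_sub]
      rw [this]; exact Submodule.smul_mem _ _ ih
  | zero => simp only [mul_zero, zero_mul, sub_zero]; exact zero_mem _
  | add x y _ _ ihx ihy =>
    have : (x + y) * b - b * (x + y) = (x * b - b * x) + (y * b - b * y) := by noncomm_ring
    rw [this]; exact add_mem ihx ihy
  | smul c x _ ih =>
    have : (c • x) * b - b * (c • x) = c • (x * b - b * x) := by
      rw [mul_smul_comm, smul_mul_assoc, smul_sub]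
    rw [this]; exact Submodule.smul_mem _ _ ih

lemma pull_lemma (h2 : (2 : k) ≠ 0) {z : A} (hzH : z ∈ Hset GS) (hz2 : z * z = 0) :
    ∀ t : List A, (∀ u ∈ t, u ∈ Hset GS) → z ∈ t → z * t.prod = 0 := by
  intro t
  induction t with
  | nil => intro _ h; simp at h
  | cons a t ih =>
    intro hmem hz
    rw [List.prod_cons, ← mul_assoc]
    rcases List.mem_cons.mp hz with rfl | hz'
    · rw [hz2, zero_mul]
    · have ha := hmem a (List.mem_cons_self)
      have hmem' : ∀ u ∈ t, u ∈ Hset GS := fun u hu => hmem u (List.mem_cons_of_mem a hu)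
      rcases sign_lemma GS h2 hzH ha with hc | ⟨hc, _⟩
      · rw [hc, mul_assoc, ih hmem' hz', mul_zero]
      · rw [hc, neg_mul, mul_assoc, ih hmem' hz', mul_zero, neg_zero]

lemma prod_eq_zero_of_dup (h2 : (2 : k) ≠ 0) {z : A} (hzH : z ∈ Hset GS) (hz2 : z * z = 0)
    {t : List A} (hd : List.Duplicate z t) (hmem : ∀ u ∈ t, u ∈ Hset GS) : t.prod = 0 := by
  induction hd with
  | cons_mem h =>
    rename_i l
    rw [List.prod_cons]
    have : z * l.prod = 0 :=
      pull_lemma GS h2 hzH hz2 l (fun u hu => hmem u (List.mem_cons_of_mem z hu)) h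
    exact this
  | cons_duplicate h ih =>
    rename_i y l
    rw [List.prod_cons, ih (fun u hu => hmem u (List.mem_cons_of_mem y hu)), mul_zero]

lemma isNil_I (h2 : (2 : k) ≠ 0) {x : A} (hx : x ∈ Isub GS) : ∃ n : ℕ, x ^ n = 0 := by
  obtain ⟨n, f, g, hsum⟩ := Submodule.mem_span_set'.mp hx
  set l : List A := List.ofFn (fun i => f i • (g i : A)) with hl
  have hx' : x = l.sum := by rw [hl, List.sum_ofFn, hsum]
  have hlZ : ∀ u ∈ l, u ∈ Zset GS := by
    intro u hu
    rw [hl, List.mem_ofFn] at hu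
    obtain ⟨i, rfl⟩ := hu
    obtain ⟨⟨p, hH⟩, hsq⟩ := (g i).2
    refine ⟨⟨p, Submodule.smul_mem _ _ hH⟩, ?_⟩
    rw [smul_mul_assoc, mul_smul_comm, hsq, smul_zero, smul_zero]
  have key : ∀ N : ℕ, x ^ N ∈ Submodule.span k
      {w : A | ∃ t : List A, t.length = N ∧ (∀ u ∈ t, u ∈ l) ∧ w = t.prod} := by
    intro N
    induction N with
    | zero =>
      exact Submodule.subset_span
        ⟨[], rfl, fun u hu => absurd hu List.not_mem_nil, by rw [pow_zero, List.prod_nil]⟩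
    | succ N ih =>
      rw [pow_succ]
      refine Submodule.span_induction
        (p := fun w _ => w * x ∈ Submodule.span k
          {w : A | ∃ t' : List A, t'.length = N + 1 ∧ (∀ u ∈ t', u ∈ l) ∧ w = t'.prod})
        ?_ ?_ ?_ ?_ ih
      · intro w hw
        obtain ⟨t, htlen, htmem, rfl⟩ := hw
        have step : ∀ l' : List A, (∀ u ∈ l', u ∈ l) → t.prod * l'.sum ∈ Submodule.span k
            {w : A | ∃ t' : List A, t'.length = N + 1 ∧ (∀ u ∈ t', u ∈ l) ∧ w = t'.prod} := by
          intro l'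
          induction l' with
          | nil => intro _; rw [List.sum_nil, mul_zero]; exact zero_mem _
          | cons u l'' ih' =>
            intro hmem'
            rw [List.sum_cons, mul_add]
            refine add_mem (Submodule.subset_span ⟨t ++ [u], ?_, ?_, ?_⟩)
              (ih' fun v hv => hmem' v (List.mem_cons_of_mem u hv))
            · rw [List.length_append, htlen]; rfl
            · intro v hv
              rcases List.mem_append.mp hv with hv | hv
              · exact htmem v hv
              · rw [List.mem_singleton.mp hv]; exact hmem' u (List.mem_cons_self)
            · rw [List.prod_append, List.prod_singleton]
        have := step l (fun u hu => hu)
        rwa [← hx'] at this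
      · show (0 : A) * x ∈ _
        rw [zero_mul]; exact zero_mem _
      · intro w₁ w₂ _ _ ih₁ ih₂
        show (w₁ + w₂) * x ∈ _
        rw [add_mul]; exact add_mem ih₁ ih₂
      · intro c w _ ihw
        show (c • w) * x ∈ _
        rw [smul_mul_assoc]; exact Submodule.smul_mem _ _ ihw
  refine ⟨l.length + 1, ?_⟩
  have hbot : Submodule.span k
      {w : A | ∃ t : List A, t.length = l.length + 1 ∧ (∀ u ∈ t, u ∈ l) ∧ w = t.prod} ≤ ⊥ := by
    rw [Submodule.span_le]
    rintro w ⟨t, htlen, htmem, rfl⟩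
    have hnd : ¬ t.Nodup := by
      intro hnd
      have := (List.subperm_of_subset hnd fun u hu => htmem u hu).length_le
      omega
    obtain ⟨z, hz⟩ := List.exists_duplicate_iff_not_nodup.mpr hnd
    have hzZ : z ∈ Zset GS := hlZ z (htmem z hz.mem)
    have : t.prod = 0 :=
      prod_eq_zero_of_dup GS h2 hzZ.1 hzZ.2 hz (fun u hu => (hlZ u (htmem u hu)).1)
    simp [this]
  have := hbot (key (l.length + 1))
  simpa using this

/-- The span of square-zero homogeneous elements as a two-sided ideal. -/
def Itsi (h2 : (2 : k) ≠ 0) : TwoSidedIdeal A :=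
  TwoSidedIdeal.mk' (Isub GS : Set A) (zero_mem _) (fun hx hy => add_mem hx hy)
    (fun hx => neg_mem hx) (fun hy => I_mul_left GS h2 _ hy) (fun hx => I_mul_right GS h2 _ hx)

lemma quot_zero_iff (h2 : (2 : k) ≠ 0) (x : A) :
    ((x : (Itsi GS h2).ringCon.Quotient) = 0) ↔ x ∈ Isub GS := by
  rw [show (0 : (Itsi GS h2).ringCon.Quotient) = ((0 : A) : (Itsi GS h2).ringCon.Quotient)
    from rfl, RingCon.eq]
  show x - 0 ∈ (Isub GS : Set A) ↔ x ∈ Isub GS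
  rw [sub_zero]; rfl

lemma quot_comm (h2 : (2 : k) ≠ 0) (u v : (Itsi GS h2).ringCon.Quotient) : u * v = v * u := by
  induction u using Quotient.inductionOn' with
  | h a =>
    induction v using Quotient.inductionOn' with
    | h b =>
      show ((a * b : A) : (Itsi GS h2).ringCon.Quotient) = ((b * a : A) : _)
      rw [RingCon.eq]
      show a * b - b * a ∈ (Isub GS : Set A)
      exact comm_mem GS h2 a b

lemma nil_iff (h2 : (2 : k) ≠ 0) (x : A) :
    (∃ n : ℕ, x ^ n = 0) ↔ IsNilpotent (x : (Itsi GS h2).ringCon.Quotient) := by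
  constructor
  · rintro ⟨n, hn⟩
    exact ⟨n, by rw [← RingCon.coe_pow, hn]; rfl⟩
  · rintro ⟨n, hn⟩
    rw [← RingCon.coe_pow, quot_zero_iff GS h2] at hn
    obtain ⟨m, hm⟩ := isNil_I GS h2 hn
    exact ⟨n * m, by rw [pow_mul, hm]⟩

lemma S_le_I (h2 : (2 : k) ≠ 0) : GS.A0odd ⊔ GS.A1ev ≤ Isub GS := by
  apply sup_le
  · apply iSup_le
    rintro ⟨⟨m, s⟩, hodd, hs⟩
    intro x hx
    apply Submodule.subset_span
    refine ⟨⟨(m, s), hx⟩, sq_zero GS h2 hx ?_⟩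
    simp only at hs
    rw [hs]
    have : (0 : ZMod 2).val = 0 := rfl
    rw [this, Nat.zero_add]
    exact Int.natAbs_odd.mpr hodd
  · apply iSup_le
    rintro ⟨⟨m, s⟩, heven, hs⟩
    intro x hx
    apply Submodule.subset_span
    refine ⟨⟨(m, s), hx⟩, sq_zero GS h2 hx ?_⟩
    simp only at hs
    rw [hs]
    have h1 : (1 : ZMod 2).val = 1 := rfl
    rw [h1]
    have : Even m.natAbs := Int.natAbs_even.mpr heven
    rw [Nat.even_iff] at this
    rw [Nat.odd_iff]
    omega

lemma decomp (x : A) : ∃ y z : A, y ∈ GS.Rsub ∧ z ∈ GS.A0odd ⊔ GS.A1ev ∧ x = y + z := by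
  have htop : (⊤ : Submodule k A) ≤ GS.Rsub ⊔ (GS.A0odd ⊔ GS.A1ev) := by
    rw [← GS.internal.submodule_iSup_eq_top]
    apply iSup_le
    intro p
    have h01 : ∀ u : ZMod 2, u = 0 ∨ u = 1 := by decide
    rcases Int.even_or_odd p.1 with hp | hp <;> rcases h01 p.2 with hq | hq
    · exact le_trans (le_iSup (fun q : {q : ℤ × ZMod 2 // (Even q.1 ∧ q.2 = 0) ∨
        (Odd q.1 ∧ q.2 = 1)} => GS.grading q) ⟨p, Or.inl ⟨hp, hq⟩⟩) le_sup_left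
    · exact le_trans (le_trans (le_iSup (fun q : {q : ℤ × ZMod 2 // Even q.1 ∧ q.2 = 1} =>
        GS.grading q) ⟨p, ⟨hp, hq⟩⟩) le_sup_right) le_sup_right
    · exact le_trans (le_trans (le_iSup (fun q : {q : ℤ × ZMod 2 // Odd q.1 ∧ q.2 = 0} =>
        GS.grading q) ⟨p, ⟨hp, hq⟩⟩) le_sup_left) le_sup_right
    · exact le_trans (le_iSup (fun q : {q : ℤ × ZMod 2 // (Even q.1 ∧ q.2 = 0) ∨
        (Odd q.1 ∧ q.2 = 1)} => GS.grading q) ⟨p, Or.inr ⟨hp, hq⟩⟩) le_sup_left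
  obtain ⟨y, hy, z, hz, hx⟩ := Submodule.mem_sup.mp (htop (Submodule.mem_top (x := x)))
  exact ⟨y, z, hy, hz, hx.symm⟩

end Statement4Aux

/-!
STATEMENT 4. `Nil(A) = { x : xⁿ = 0 for some n }` equals `Nil(R) ⊕ A₀ᵒᵈᵈ ⊕ A₁ᵉᵛ`
where `R = A₀ᵉᵛ ⊕ A₁ᵒᵈᵈ`, and `Nil(A)` is a two-sided ideal of `A` with `A/Nil(A)`
a reduced commutative ring (expressed by: `Nil(A)` is closed under the module
operations and two-sided multiplication, all commutators `a*b - b*a` are nilpotent,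
and the set of nilpotents is radical).
-/
theorem statement4 {k A : Type} [Field k] [Ring A] [Algebra k A]
    (h2 : (2 : k) ≠ 0) (GS : GradedSuperalgebra k A) :
    -- `Nil(A) = Nil(R) ⊕ A₀ᵒᵈᵈ ⊕ A₁ᵉᵛ`
    ({x : A | ∃ n : ℕ, x ^ n = 0} =
      {x : A | ∃ y z : A, y ∈ GS.Rsub ∧ (∃ n : ℕ, y ^ n = 0) ∧
        z ∈ GS.A0odd ⊔ GS.A1ev ∧ x = y + z}) ∧
    -- `Nil(A)` is a two-sided ideal of `A`
    (∀ x y : A, (∃ n : ℕ, x ^ n = 0) → (∃ n : ℕ, y ^ n = 0) →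
      ∃ n : ℕ, (x + y) ^ n = 0) ∧
    (∀ (c : k) (x : A), (∃ n : ℕ, x ^ n = 0) → ∃ n : ℕ, (c • x) ^ n = 0) ∧
    (∀ a x : A, (∃ n : ℕ, x ^ n = 0) →
      (∃ n : ℕ, (a * x) ^ n = 0) ∧ (∃ n : ℕ, (x * a) ^ n = 0)) ∧
    -- the quotient `A/Nil(A)` is commutative (and reduced, which is automatic)
    (∀ a b : A, ∃ n : ℕ, (a * b - b * a) ^ n = 0) := by
  have nil_add : ∀ x y : A, (∃ n : ℕ, x ^ n = 0) → (∃ n : ℕ, y ^ n = 0) →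
      ∃ n : ℕ, (x + y) ^ n = 0 := by
    intro x y hx hy
    rw [nil_iff GS h2] at hx hy ⊢
    rw [RingCon.coe_add]
    exact Commute.isNilpotent_add (quot_comm GS h2 _ _) hx hy
  have nil_mul : ∀ a x : A, (∃ n : ℕ, x ^ n = 0) →
      (∃ n : ℕ, (a * x) ^ n = 0) ∧ (∃ n : ℕ, (x * a) ^ n = 0) := by
    intro a x hx
    rw [nil_iff GS h2] at hx
    constructor
    · rw [nil_iff GS h2, RingCon.coe_mul]
      exact Commute.isNilpotent_mul_left (quot_comm GS h2 _ _) hx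
    · rw [nil_iff GS h2, RingCon.coe_mul]
      exact Commute.isNilpotent_mul_right (quot_comm GS h2 _ _) hx
  refine ⟨?_, nil_add, ?_, nil_mul, ?_⟩
  · ext x
    simp only [Set.mem_setOf_eq]
    constructor
    · intro hx
      obtain ⟨y, z, hy, hz, hxyz⟩ := decomp GS x
      refine ⟨y, z, hy, ?_, hz, hxyz⟩
      rw [nil_iff GS h2]
      have hzI : z ∈ Isub GS := S_le_I GS h2 hz
      have : (y : (Itsi GS h2).ringCon.Quotient) = (x : (Itsi GS h2).ringCon.Quotient) := by
        rw [hxyz, RingCon.coe_add, (quot_zero_iff GS h2 z).mpr hzI, add_zero]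
      rw [this, ← nil_iff GS h2]
      exact hx
    · rintro ⟨y, z, _, hynil, hz, rfl⟩
      rw [nil_iff GS h2, RingCon.coe_add, (quot_zero_iff GS h2 z).mpr (S_le_I GS h2 hz),
        add_zero, ← nil_iff GS h2]
      exact hynil
  · intro c x hx
    rw [Algebra.smul_def]
    exact (nil_mul _ x hx).1
  · intro a b
    exact isNil_I GS h2 (comm_mem GS h2 a b)
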